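/- Repulsing-AST Rule (adapted from Chatterjee–Novotný–Žikelić): Let (M_n)_{n∈ℕ} be an adapted, integrable real-valued process on a filtered probability space and T a stopping time. Suppose there are constants ε > 0 and c > 0 such that: (i) M_0 < 0 P-almost surely; (ii) for every n ∈ ℕ, M_n ≥ 0 P-almost everywhere on the event {T = n}; (iii) for every n ∈ ℕ, E(M_{n+1} | ℱ_n) ≤ M_n − ε P-almost everywhere on {T > n}; and (iv) for every n ∈ ℕ, |M_{n+1} − M_n| < c P-almost surely. Then P(T = ∞) > 0, i.e. termination is not almost sure. -/

import Mathlib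

open MeasureTheory Filter
open scoped ENNReal

section Aux
variable {Ω : Type*}

open Classical in
noncomputable def stopW (M : ℕ → Ω → ℝ) (T : Ω → ℕ∞) : ℕ → Ω → ℝ
  | 0 => M 0
  | (n+1) => fun ω => if ((n : ℕ∞) < T ω) then M (n+1) ω else stopW M T n ω

lemma stopW_succ_of_lt (M : ℕ → Ω → ℝ) (T : Ω → ℕ∞) {n : ℕ} {ω : Ω} (h : (n : ℕ∞) < T ω) :
    stopW M T (n+1) ω = M (n+1) ω := by simp [stopW, h]

lemma stopW_succ_of_ge (M : ℕ → Ω → ℝ) (T : Ω → ℕ∞) {n : ℕ} {ω : Ω} (h : ¬ ((n : ℕ∞) < T ω)) :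
    stopW M T (n+1) ω = stopW M T n ω := by simp [stopW, h]

lemma stopW_of_le (M : ℕ → Ω → ℝ) (T : Ω → ℕ∞) {n : ℕ} {ω : Ω} (h : (n : ℕ∞) ≤ T ω) :
    stopW M T n ω = M n ω := by
  induction n with
  | zero => rfl
  | succ k ih =>
      refine stopW_succ_of_lt M T (lt_of_lt_of_le ?_ h)
      exact_mod_cast Nat.lt_succ_self k

lemma stopW_exists (M : ℕ → Ω → ℝ) (T : Ω → ℕ∞) (n : ℕ) (ω : Ω) :
    ∃ k ≤ n, stopW M T n ω = M k ω := by
  induction n with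
  | zero => exact ⟨0, le_refl 0, rfl⟩
  | succ k ih =>
      by_cases h : (k : ℕ∞) < T ω
      · exact ⟨k+1, le_refl _, stopW_succ_of_lt M T h⟩
      · obtain ⟨j, hj, he⟩ := ih
        exact ⟨j, hj.trans (Nat.le_succ k), (stopW_succ_of_ge M T h).trans he⟩

lemma stopW_of_eq (M : ℕ → Ω → ℝ) (T : Ω → ℕ∞) {k : ℕ} {ω : Ω} (h : T ω = (k : ℕ∞))
    {n : ℕ} (hk : k ≤ n) : stopW M T n ω = M k ω := by
  induction n with
  | zero =>
      obtain rfl : k = 0 := Nat.le_zero.1 hk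
      rfl
  | succ m ih =>
      rcases Nat.lt_or_ge m k with hm | hm
      · have hk' : k = m + 1 := le_antisymm hk hm
        subst hk'
        refine stopW_succ_of_lt M T ?_
        rw [h]; exact_mod_cast Nat.lt_succ_self m
      · have hne : ¬ ((m : ℕ∞) < T ω) := by
          rw [h]; exact_mod_cast Nat.not_lt.2 hm
        exact (stopW_succ_of_ge M T hne).trans (ih hm)

lemma exp_le_one_add (x : ℝ) (hx : |x| ≤ 1) : Real.exp x ≤ 1 + x + x ^ 2 := by
  have h := Real.exp_bound hx (n := 2) (by norm_num)
  have hsum : ∑ m ∈ Finset.range 2, x ^ m / m.factorial = 1 + x := by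
    simp [Finset.sum_range_succ]
  rw [hsum] at h
  have h2 := (abs_sub_le_iff.1 h).1
  have h3 : ((Nat.succ 2 : ℕ) : ℝ) / ((Nat.factorial 2 : ℕ) * (2:ℕ)) = 3/4 := by norm_num [Nat.factorial]
  rw [h3, sq_abs] at h2
  nlinarith [sq_nonneg x]

end Aux

/-- **Repulsing-AST Rule.** If `(M n)` is an adapted integrable process, `T` a stopping
time, and there are constants `ε > 0` and `c > 0` such that `M 0 < 0` a.s., `M n ≥ 0` a.e.
on `{T = n}`, the conditional expectation decreases by at least `ε` on `{T > n}`, and the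
differences are bounded by `c` a.s., then `P(T = ∞) > 0` (termination is not almost sure). -/
theorem repulsing_ast_rule
    {Ω : Type*} {mΩ : MeasurableSpace Ω} {P : Measure Ω} [IsProbabilityMeasure P]
    (ℱ : Filtration ℕ mΩ) (M : ℕ → Ω → ℝ) (T : Ω → ℕ∞)
    (hAdapted : Adapted ℱ M) (hInt : ∀ n, Integrable (M n) P)
    (hStop : ∀ n : ℕ, MeasurableSet[ℱ n] {ω | T ω ≤ (n : ℕ∞)})
    (ε c : ℝ) (hε : 0 < ε) (hc : 0 < c)
    (hNeg : ∀ᵐ ω ∂P, M 0 ω < 0)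
    (hTerm : ∀ n : ℕ, ∀ᵐ ω ∂P, T ω = (n : ℕ∞) → 0 ≤ M n ω)
    (hDrift : ∀ n : ℕ, ∀ᵐ ω ∂P, (n : ℕ∞) < T ω →
      (P[M (n + 1)|ℱ n]) ω ≤ M n ω - ε)
    (hBdd : ∀ n : ℕ, ∀ᵐ ω ∂P, |M (n + 1) ω - M n ω| < c) :
    0 < P {ω | T ω = ⊤} := by
  classical
  -- the small parameter t
  set t : ℝ := min c⁻¹ (ε / c ^ 2) with ht_def
  have ht : 0 < t := lt_min (inv_pos.2 hc) (div_pos hε (by positivity))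
  have htc : t * c ≤ 1 := by
    have h1 : t ≤ c⁻¹ := min_le_left _ _
    calc t * c ≤ c⁻¹ * c := by nlinarith
    _ = 1 := inv_mul_cancel₀ hc.ne'
  have htεc : t ^ 2 * c ^ 2 ≤ t * ε := by
    have h1 : t ≤ ε / c ^ 2 := min_le_right _ _
    have h2 : t * c ^ 2 ≤ ε := by
      rw [le_div_iff₀ (by positivity : (0:ℝ) < c ^ 2)] at h1
      linarith
    nlinarith [ht.le]
  -- measurability of T-events
  have hTgtm : ∀ n : ℕ, MeasurableSet[ℱ n] {ω | (n : ℕ∞) < T ω} := by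
    intro n
    have : {ω | (n : ℕ∞) < T ω} = {ω | T ω ≤ (n : ℕ∞)}ᶜ := by
      ext ω; simp [not_le]
    rw [this]; exact (hStop n).compl
  have hTgtm' : ∀ n : ℕ, MeasurableSet[mΩ] {ω | (n : ℕ∞) < T ω} := fun n => ℱ.le n _ (hTgtm n)
  -- the processes
  set X : ℕ → Ω → ℝ := fun n ω => Real.exp (t * stopW M T n ω) with hX_def
  set g : ℕ → Ω → ℝ := fun n ω => if (n : ℕ∞) < T ω then Real.exp (t * M n ω) else 0 with hg_def
  have hgnn : ∀ n ω, 0 ≤ g n ω := by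
    intro n ω; rw [hg_def]; dsimp only; split_ifs
    · exact (Real.exp_pos _).le
    · exact le_refl 0
  -- measurability
  have hWm : ∀ n, Measurable (stopW M T n) := by
    intro n
    induction n with
    | zero => exact ((hAdapted 0).mono (ℱ.le 0) le_rfl)
    | succ k ih =>
        exact Measurable.ite (hTgtm' k) ((hAdapted (k+1)).mono (ℱ.le (k+1)) le_rfl) ih
  have hXm : ∀ n, Measurable (X n) := fun n =>
    Real.measurable_exp.comp (measurable_const.mul (hWm n))
  have hgm : ∀ n, StronglyMeasurable[ℱ n] (g n) := by
    intro n
    refine Measurable.stronglyMeasurable ?_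
    exact Measurable.ite (hTgtm n)
      (Real.measurable_exp.comp (measurable_const.mul (hAdapted n)))
      measurable_const
  -- a.e. bounds
  have hBddAll : ∀ᵐ ω ∂P, ∀ n, |M (n+1) ω - M n ω| < c := ae_all_iff.2 hBdd
  have hMle : ∀ᵐ ω ∂P, ∀ n : ℕ, M n ω ≤ c * n := by
    filter_upwards [hBddAll, hNeg] with ω hb h0
    intro n
    induction n with
    | zero => simpa using h0.le
    | succ k ih =>
        have h2 := (abs_lt.1 (hb k)).2
        push_cast
        push_cast at ih
        linarith
  have hWle : ∀ᵐ ω ∂P, ∀ n : ℕ, stopW M T n ω ≤ c * n := by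
    filter_upwards [hMle] with ω hm
    intro n
    obtain ⟨k, hk, he⟩ := stopW_exists M T n ω
    rw [he]
    calc M k ω ≤ c * k := hm k
    _ ≤ c * n := by
        have : (k:ℝ) ≤ n := by exact_mod_cast hk
        nlinarith
  have hXle : ∀ᵐ ω ∂P, ∀ n : ℕ, X n ω ≤ Real.exp (t * (c * n)) := by
    filter_upwards [hWle] with ω hw
    intro n
    exact Real.exp_le_exp.2 (by nlinarith [hw n, ht.le])
  have hgle : ∀ᵐ ω ∂P, ∀ n : ℕ, g n ω ≤ Real.exp (t * (c * n)) := by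
    filter_upwards [hMle] with ω hm
    intro n
    rw [hg_def]; dsimp only; split_ifs
    · exact Real.exp_le_exp.2 (by nlinarith [hm n, ht.le])
    · exact (Real.exp_pos _).le
  -- integrability
  have hXint : ∀ n, Integrable (X n) P := by
    intro n
    refine Integrable.mono' (integrable_const (Real.exp (t * (c * n))))
      (hXm n).aestronglyMeasurable ?_
    filter_upwards [hXle] with ω h
    rw [Real.norm_eq_abs, abs_of_pos (Real.exp_pos _)]
    exact h n
  have hgint : ∀ n, Integrable (g n) P := by
    intro n
    refine Integrable.mono' (integrable_const (Real.exp (t * (c * n))))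
      ((hgm n).mono (ℱ.le n)).aestronglyMeasurable ?_
    filter_upwards [hgle] with ω h
    rw [Real.norm_eq_abs, abs_of_nonneg (hgnn n ω)]
    exact h n
  have hgfint : ∀ n, Integrable (fun ω => g n ω * (M (n+1) ω - M n ω)) P := by
    intro n
    have hf : Integrable (fun ω => M (n+1) ω - M n ω) P := (hInt (n+1)).sub (hInt n)
    refine Integrable.mono' (hf.norm.const_mul (Real.exp (t * (c * n))))
      (((hgm n).mono (ℱ.le n)).aestronglyMeasurable.mul hf.aestronglyMeasurable) ?_
    filter_upwards [hgle] with ω h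
    rw [norm_mul, Real.norm_eq_abs, abs_of_nonneg (hgnn n ω)]
    exact mul_le_mul_of_nonneg_right (h n) (norm_nonneg _)
  haveI : ∀ n : ℕ, SigmaFinite (P.trim (ℱ.le n)) := fun n => inferInstance
  -- key drift step via pull-out
  have hkey : ∀ n, ∫ ω, g n ω * (M (n+1) ω - M n ω) ∂P ≤ (-ε) * ∫ ω, g n ω ∂P := by
    intro n
    set f : Ω → ℝ := fun ω => M (n+1) ω - M n ω with hf_def
    have hf : Integrable f P := (hInt (n+1)).sub (hInt n)
    have hgfint' : Integrable (g n * f) P := hgfint n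
    have hpull : P[g n * f|ℱ n] =ᵐ[P] g n * P[f|ℱ n] :=
      condExp_mul_of_stronglyMeasurable_left (hgm n) hgfint' hf
    have h1 : ∫ ω, g n ω * f ω ∂P = ∫ ω, g n ω * (P[f|ℱ n]) ω ∂P := by
      have e1 : ∫ ω, (P[g n * f|ℱ n]) ω ∂P = ∫ ω, (g n * f) ω ∂P :=
        integral_condExp (ℱ.le n)
      have e2 : ∫ ω, (P[g n * f|ℱ n]) ω ∂P = ∫ ω, (g n * P[f|ℱ n]) ω ∂P :=
        integral_congr_ae hpull
      calc ∫ ω, g n ω * f ω ∂P = ∫ ω, (g n * f) ω ∂P := rfl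
      _ = ∫ ω, (P[g n * f|ℱ n]) ω ∂P := e1.symm
      _ = ∫ ω, (g n * P[f|ℱ n]) ω ∂P := e2
      _ = ∫ ω, g n ω * (P[f|ℱ n]) ω ∂P := rfl
    have hfc : P[f|ℱ n] =ᵐ[P] fun ω => (P[M (n+1)|ℱ n]) ω - M n ω := by
      have hsub := condExp_sub (μ := P) (m := ℱ n) (hInt (n+1)) (hInt n)
      have hself : P[M n|ℱ n] = M n :=
        condExp_of_stronglyMeasurable (ℱ.le n) (hAdapted n).stronglyMeasurable (hInt n)
      have hfeq : f = M (n+1) - M n := rfl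
      filter_upwards [hsub] with ω hω
      calc (P[f|ℱ n]) ω = (P[M (n+1) - M n|ℱ n]) ω := by rw [hfeq]
      _ = (P[M (n+1)|ℱ n] - P[M n|ℱ n]) ω := hω
      _ = (P[M (n+1)|ℱ n]) ω - M n ω := by rw [Pi.sub_apply, hself]
    have hcint : Integrable (fun ω => g n ω * (P[f|ℱ n]) ω) P := by
      have hcond : Integrable (P[f|ℱ n]) P := integrable_condExp
      refine Integrable.mono' (hcond.norm.const_mul (Real.exp (t * (c * n))))
        (((hgm n).mono (ℱ.le n)).aestronglyMeasurable.mul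
          hcond.aestronglyMeasurable) ?_
      filter_upwards [hgle] with ω h
      rw [norm_mul, Real.norm_eq_abs, abs_of_nonneg (hgnn n ω)]
      exact mul_le_mul_of_nonneg_right (h n) (norm_nonneg _)
    have hmono : ∀ᵐ ω ∂P, g n ω * (P[f|ℱ n]) ω ≤ (-ε) * g n ω := by
      filter_upwards [hfc, hDrift n] with ω h1 h2
      by_cases hT : (n : ℕ∞) < T ω
      · have hle : (P[f|ℱ n]) ω ≤ -ε := by
          rw [h1]
          have := h2 hT
          linarith
        have hg0 : 0 ≤ g n ω := hgnn n ω
        calc g n ω * (P[f|ℱ n]) ω ≤ g n ω * (-ε) := mul_le_mul_of_nonneg_left hle hg0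
        _ = -ε * g n ω := mul_comm _ _
      · have : g n ω = 0 := by rw [hg_def]; dsimp only; rw [if_neg hT]
        rw [this]; simp
    calc ∫ ω, g n ω * f ω ∂P = ∫ ω, g n ω * (P[f|ℱ n]) ω ∂P := h1
    _ ≤ ∫ ω, (-ε) * g n ω ∂P := integral_mono_ae hcint ((hgint n).const_mul (-ε)) hmono
    _ = (-ε) * ∫ ω, g n ω ∂P := integral_const_mul _ _
  -- expectations decrease
  have hstep : ∀ n, ∫ ω, X (n+1) ω ∂P ≤ ∫ ω, X n ω ∂P := by
    intro n
    have hpt : ∀ᵐ ω ∂P, X (n+1) ω ≤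
        X n ω + (t * (g n ω * (M (n+1) ω - M n ω)) + (t ^ 2 * c ^ 2) * g n ω) := by
      filter_upwards [hBddAll] with ω hb
      by_cases hT : (n : ℕ∞) < T ω
      · have hW1 : stopW M T (n+1) ω = M (n+1) ω := stopW_succ_of_lt M T hT
        have hW0 : stopW M T n ω = M n ω := stopW_of_le M T hT.le
        have hgω : g n ω = Real.exp (t * M n ω) := by rw [hg_def]; dsimp only; rw [if_pos hT]
        have hΔ : |M (n+1) ω - M n ω| < c := hb n
        have habs : |t * (M (n+1) ω - M n ω)| ≤ 1 := by
          rw [abs_mul, abs_of_pos ht]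
          nlinarith [abs_nonneg (M (n+1) ω - M n ω)]
        have hexp : Real.exp (t * (M (n+1) ω - M n ω)) ≤
            1 + t * (M (n+1) ω - M n ω) + t ^ 2 * c ^ 2 := by
          have h1 := exp_le_one_add _ habs
          have h5 : (M (n+1) ω - M n ω) ^ 2 ≤ c ^ 2 := by
            nlinarith [abs_nonneg (M (n+1) ω - M n ω), sq_abs (M (n+1) ω - M n ω)]
          have h2 : (t * (M (n+1) ω - M n ω)) ^ 2 ≤ t ^ 2 * c ^ 2 := by
            rw [mul_pow]
            exact mul_le_mul_of_nonneg_left h5 (sq_nonneg t)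
          linarith
        have hXsplit : X (n+1) ω = Real.exp (t * M n ω) *
            Real.exp (t * (M (n+1) ω - M n ω)) := by
          rw [hX_def]; dsimp only; rw [hW1, ← Real.exp_add]; ring_nf
        rw [hX_def] at hXsplit ⊢
        dsimp only at hXsplit ⊢
        rw [hW0, hXsplit, hgω]
        nlinarith [Real.exp_pos (t * M n ω), hexp]
      · have hW1 : stopW M T (n+1) ω = stopW M T n ω := stopW_succ_of_ge M T hT
        have hgω : g n ω = 0 := by rw [hg_def]; dsimp only; rw [if_neg hT]
        rw [hX_def]; dsimp only; rw [hW1, hgω]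
        simp
    have hRint : Integrable (fun ω => X n ω +
        (t * (g n ω * (M (n+1) ω - M n ω)) + (t ^ 2 * c ^ 2) * g n ω)) P :=
      (hXint n).add (((hgfint n).const_mul t).add ((hgint n).const_mul (t ^ 2 * c ^ 2)))
    have h2 : ∫ ω, X (n+1) ω ∂P ≤ ∫ ω, (X n ω +
        (t * (g n ω * (M (n+1) ω - M n ω)) + (t ^ 2 * c ^ 2) * g n ω)) ∂P :=
      integral_mono_ae (hXint (n+1)) hRint hpt
    have hI1 : Integrable (fun ω => t * (g n ω * (M (n+1) ω - M n ω))) P :=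
      (hgfint n).const_mul t
    have hI2 : Integrable (fun ω => (t ^ 2 * c ^ 2) * g n ω) P :=
      (hgint n).const_mul (t ^ 2 * c ^ 2)
    have hI12 : Integrable (fun ω => t * (g n ω * (M (n+1) ω - M n ω)) +
        (t ^ 2 * c ^ 2) * g n ω) P := hI1.add hI2
    have h3 : ∫ ω, (X n ω + (t * (g n ω * (M (n+1) ω - M n ω)) +
        (t ^ 2 * c ^ 2) * g n ω)) ∂P = ∫ ω, X n ω ∂P +
        (t * ∫ ω, g n ω * (M (n+1) ω - M n ω) ∂P + (t ^ 2 * c ^ 2) * ∫ ω, g n ω ∂P) := by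
      rw [integral_add (hXint n) hI12, integral_add hI1 hI2,
        integral_const_mul, integral_const_mul]
    have hg0 : 0 ≤ ∫ ω, g n ω ∂P := integral_nonneg (fun ω => hgnn n ω)
    have h4 := hkey n
    have h5 : t * ∫ ω, g n ω * (M (n+1) ω - M n ω) ∂P ≤ t * ((-ε) * ∫ ω, g n ω ∂P) :=
      mul_le_mul_of_nonneg_left h4 ht.le
    rw [h3] at h2
    nlinarith [h2, h5, hg0, htεc]
  have hdec : ∀ n, ∫ ω, X n ω ∂P ≤ ∫ ω, X 0 ω ∂P := by
    intro n
    induction n with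
    | zero => exact le_refl _
    | succ k ih => exact (hstep k).trans ih
  -- E X 0 < 1
  have hX0lt : ∫ ω, X 0 ω ∂P < 1 := by
    have hlt : ∀ᵐ ω ∂P, X 0 ω < 1 := by
      filter_upwards [hNeg] with ω h
      have h1 : t * M 0 ω < 0 := mul_neg_of_pos_of_neg ht h
      have : stopW M T 0 ω = M 0 ω := rfl
      rw [hX_def]; dsimp only; rw [this]
      calc Real.exp (t * M 0 ω) < Real.exp 0 := Real.exp_lt_exp.2 h1
      _ = 1 := Real.exp_zero
    set hfun : Ω → ℝ := fun ω => 1 - X 0 ω with hfun_def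
    have hint : Integrable hfun P := (integrable_const 1).sub (hXint 0)
    have hnn : 0 ≤ᵐ[P] hfun := by
      filter_upwards [hlt] with ω h
      simp only [hfun_def, Pi.zero_apply]
      linarith
    have hintpos : 0 < ∫ ω, hfun ω ∂P := by
      rcases (integral_nonneg_of_ae hnn).lt_or_eq with h1 | h1
      · exact h1
      · exfalso
        have hzero : hfun =ᵐ[P] 0 :=
          (integral_eq_zero_iff_of_nonneg_ae hnn hint).1 h1.symm
        haveI : (ae P).NeBot := ae_neBot.2 (IsProbabilityMeasure.ne_zero P)
        obtain ⟨ω, h2, h3⟩ := (hzero.and hlt).exists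
        simp only [hfun_def, Pi.zero_apply] at h2
        linarith
    have heq : ∫ ω, hfun ω ∂P = 1 - ∫ ω, X 0 ω ∂P := by
      rw [hfun_def]
      rw [integral_sub (integrable_const 1) (hXint 0), integral_const]
      simp
    linarith [heq ▸ hintpos]
  -- conclusion by contradiction
  by_contra hcon
  push_neg at hcon
  have hP0 : P {ω | T ω = ⊤} = 0 := le_antisymm hcon (zero_le)
  have hTfin : ∀ᵐ ω ∂P, T ω ≠ ⊤ := by
    rw [ae_iff]
    convert hP0 using 2
    ext ω; simp
  have hTermAll : ∀ᵐ ω ∂P, ∀ n : ℕ, T ω = (n : ℕ∞) → 0 ≤ M n ω := ae_all_iff.2 hTerm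
  have hlim : ∀ᵐ ω ∂P, (1 : ℝ≥0∞) ≤ atTop.liminf (fun n => ENNReal.ofReal (X n ω)) := by
    filter_upwards [hTfin, hTermAll] with ω hfin hter
    obtain ⟨k, hk⟩ := WithTop.ne_top_iff_exists.1 hfin
    have hM : 0 ≤ M k ω := hter k hk.symm
    have hev : ∀ᶠ n in atTop, (1 : ℝ≥0∞) ≤ ENNReal.ofReal (X n ω) := by
      filter_upwards [eventually_ge_atTop k] with n hn
      have hW : stopW M T n ω = M k ω := stopW_of_eq M T hk.symm hn
      rw [hX_def]; dsimp only; rw [hW]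
      rw [ENNReal.one_le_ofReal]
      exact Real.one_le_exp (by nlinarith [ht.le])
    exact le_liminf_of_le (by isBoundedDefault) hev
  have h1 : (1 : ℝ≥0∞) ≤ ∫⁻ ω, atTop.liminf (fun n => ENNReal.ofReal (X n ω)) ∂P := by
    calc (1 : ℝ≥0∞) = ∫⁻ _, 1 ∂P := by simp
    _ ≤ _ := lintegral_mono_ae hlim
  have h2 : ∫⁻ ω, atTop.liminf (fun n => ENNReal.ofReal (X n ω)) ∂P ≤
      atTop.liminf (fun n => ∫⁻ ω, ENNReal.ofReal (X n ω) ∂P) :=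
    lintegral_liminf_le' (fun n => ((hXm n).ennreal_ofReal).aemeasurable)
  have h3 : ∀ n, ∫⁻ ω, ENNReal.ofReal (X n ω) ∂P ≤ ENNReal.ofReal (∫ ω, X 0 ω ∂P) := by
    intro n
    rw [← ofReal_integral_eq_lintegral_ofReal (hXint n)
      (ae_of_all _ fun ω => (Real.exp_pos _).le)]
    exact ENNReal.ofReal_le_ofReal (hdec n)
  have h4 : atTop.liminf (fun n => ∫⁻ ω, ENNReal.ofReal (X n ω) ∂P) ≤
      ENNReal.ofReal (∫ ω, X 0 ω ∂P) := by
    refine liminf_le_of_le (by isBoundedDefault) ?_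
    intro b hb
    obtain ⟨n, hn⟩ := hb.exists
    exact hn.trans (h3 n)
  have hfinal : (1 : ℝ≥0∞) ≤ ENNReal.ofReal (∫ ω, X 0 ω ∂P) := (h1.trans h2).trans h4
  have : ENNReal.ofReal (∫ ω, X 0 ω ∂P) < 1 := ENNReal.ofReal_lt_one.2 hX0lt
  exact absurd hfinal (not_le.2 this)
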